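/- Let ω be a regular modulus of continuity. There is a constant C = C(ω) > 0 such that for every g ∈ BMO_ω(ℂ) ∩ L^∞(ℂ) and every square Q ⊂ ℂ with center z₀ and side length ℓ = ℓ(Q) ≤ 1/4, the integral ∫_{ℂ∖2Q} |g(u) − g_Q| / |u − z₀|³ dA(u) converges and ℓ·∫_{ℂ∖2Q} |g(u) − g_Q| / |u − z₀|³ dA(u) ≤ C·(‖g‖_{BMO_ω} + ‖g‖_{L^∞(ℂ)})·ω(ℓ). -/

import Mathlib

open MeasureTheory Set Filter
open scoped Classical

noncomputable section

/-- The axis-parallel closed square with center `c` and side length `l`. -/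
def Sq (c : ℂ) (l : ℝ) : Set ℂ :=
  {z : ℂ | |z.re - c.re| ≤ l / 2 ∧ |z.im - c.im| ≤ l / 2}

/-- Mean value of `f` over a set `S` with respect to planar Lebesgue measure. -/
def avgOn (f : ℂ → ℂ) (S : Set ℂ) : ℂ :=
  ((volume S).toReal)⁻¹ • ∫ z in S, f z

/-- `ω` is a modulus of continuity: increasing, continuous on `[0,∞)`,
vanishing at `0` and positive for positive arguments. -/
def IsModulus (ω : ℝ → ℝ) : Prop :=
  ContinuousOn ω (Ici 0) ∧ MonotoneOn ω (Ici 0) ∧ ω 0 = 0 ∧ ∀ t : ℝ, 0 < t → 0 < ω t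

/-- `ω` is Dini-smooth: `∫₀¹ ω(t)/t dt < ∞`. -/
def IsDini (ω : ℝ → ℝ) : Prop :=
  IntegrableOn (fun t => ω t / t) (Ioc (0:ℝ) 1)

/-- `ω` is regular: Dini-smooth and `ω(t)/t^ε` is almost decreasing
for some `ε ∈ (0,1)`. -/
def IsRegularModulus (ω : ℝ → ℝ) : Prop :=
  IsDini ω ∧ ∃ ε ∈ Ioo (0:ℝ) 1, ∃ C₀ : ℝ, 0 < C₀ ∧
    ∀ t s : ℝ, 0 < s → s < t → ω t / t ^ ε ≤ C₀ * (ω s / s ^ ε)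

/-- `N` is a `BMO_ω(ℂ)` bound for `g`: for every square `Q`,
`∫_Q |g - g_Q| ≤ N · ω(ℓ(Q)) · |Q|`. -/
def BMOBound (ω : ℝ → ℝ) (g : ℂ → ℂ) (N : ℝ) : Prop :=
  ∀ (c : ℂ) (l : ℝ), 0 < l →
    ∫ z in Sq c l, ‖g z - avgOn g (Sq c l)‖ ≤ N * (ω l * l ^ 2)

/-- `N` is a `BMO_ω(Ω)` bound for `f`: for every square `Q` meeting `Ω`,
`∫_{Q∩Ω} |f - f_{Q|Ω}| ≤ N · ω(ℓ(Q)) · |Q|`. -/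
def BMOBoundOn (ω : ℝ → ℝ) (Ω : Set ℂ) (f : ℂ → ℂ) (N : ℝ) : Prop :=
  ∀ (c : ℂ) (l : ℝ), 0 < l → (Sq c l ∩ Ω).Nonempty →
    ∫ z in Sq c l ∩ Ω, ‖f z - avgOn f (Sq c l ∩ Ω)‖ ≤ N * (ω l * l ^ 2)

/-- `Ω` is a bounded domain in `ℂ`. -/
def IsBoundedDomain (Ω : Set ℂ) : Prop :=
  IsOpen Ω ∧ IsConnected Ω ∧ Bornology.IsBounded Ω

/-- `Ω ⊂ ℂ` has `C^{1,ω}`-smooth boundary: near each boundary point, after a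
rotation by an integer multiple of `π/2`, `Ω` is the subgraph of a `C^{1,ω}`
function `φ` with `φ 0 = 0`. -/
def HasC1OmegaBoundary (ω : ℝ → ℝ) (Ω : Set ℂ) : Prop :=
  ∀ ζ ∈ frontier Ω, ∃ (r C : ℝ) (k : ℤ) (φ : ℝ → ℝ),
    0 < r ∧ 0 < C ∧ φ 0 = 0 ∧ Differentiable ℝ φ ∧
    (∀ s t : ℝ, |deriv φ s - deriv φ t| ≤ C * ω |s - t|) ∧
    ((fun z : ℂ => Complex.I ^ k * (z - ζ)) '' Ω) ∩
        {z : ℂ | z.re ∈ Ioo (-r) r ∧ z.im ∈ Ioo (-r) r} =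
      {z : ℂ | z.re ∈ Ioo (-r) r ∧ z.im ∈ Ioo (-r) (min (φ z.re) r)}

/-- `v` is the value at `z` of the restricted Beurling transform of `f` on `Ω`,
defined by the principal value
`B_Ω f(z) = -(1/π) lim_{ε→0⁺} ∫_{w ∈ Ω, |w-z| > ε} f(w)/(z-w)² dA(w)`. -/
def HasPVBeurling (Ω : Set ℂ) (f : ℂ → ℂ) (z v : ℂ) : Prop :=
  Tendsto (fun ε : ℝ =>
      -(Real.pi : ℂ)⁻¹ * ∫ w in {w ∈ Ω | ε < ‖w - z‖}, f w / (z - w) ^ 2)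
    (nhdsWithin 0 (Ioi 0)) (nhds v)


section Helpers

lemma Sq_subset (c : ℂ) {s t : ℝ} (h : s ≤ t) : Sq c s ⊆ Sq c t := by
  intro z ⟨h1, h2⟩
  exact ⟨h1.trans (by linarith), h2.trans (by linarith)⟩

lemma isClosed_Sq (c : ℂ) (l : ℝ) : IsClosed (Sq c l) := by
  have : Sq c l = (fun z : ℂ => |z.re - c.re|) ⁻¹' (Iic (l/2)) ∩
      (fun z : ℂ => |z.im - c.im|) ⁻¹' (Iic (l/2)) := rfl
  rw [this]
  exact (isClosed_Iic.preimage (by continuity)).inter (isClosed_Iic.preimage (by continuity))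

lemma isCompact_Sq (c : ℂ) (l : ℝ) : IsCompact (Sq c l) := by
  refine Metric.isCompact_of_isClosed_isBounded (isClosed_Sq c l) ?_
  refine (Metric.isBounded_iff_subset_closedBall c).2 ⟨|l|, fun z ⟨h1, h2⟩ => ?_⟩
  have hre : |z.re - c.re| ≤ |l| / 2 := h1.trans (by
    have := le_abs_self l; linarith)
  have him : |z.im - c.im| ≤ |l| / 2 := h2.trans (by
    have := le_abs_self l; linarith)
  have : ‖z - c‖ ≤ |z.re - c.re| + |z.im - c.im| := by
    simpa [Complex.sub_re, Complex.sub_im] using Complex.norm_le_abs_re_add_abs_im (z - c)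
  simp only [Metric.mem_closedBall, Complex.dist_eq]
  linarith

lemma measurableSet_Sq (c : ℂ) (l : ℝ) : MeasurableSet (Sq c l) :=
  (isClosed_Sq c l).measurableSet

lemma volume_Sq (c : ℂ) {l : ℝ} (hl : 0 ≤ l) : volume (Sq c l) = ENNReal.ofReal (l^2) := by
  have hSq : Sq c l = ⇑Complex.measurableEquivRealProd ⁻¹'
      (Icc (c.re - l/2) (c.re + l/2) ×ˢ Icc (c.im - l/2) (c.im + l/2)) := by
    ext z
    simp only [Sq, mem_setOf_eq, mem_preimage, Complex.measurableEquivRealProd_apply,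
      mem_prod, mem_Icc]
    constructor
    · rintro ⟨h1, h2⟩
      rw [abs_le] at h1 h2
      exact ⟨⟨by linarith [h1.1], by linarith [h1.2]⟩, ⟨by linarith [h2.1], by linarith [h2.2]⟩⟩
    · rintro ⟨⟨a1, a2⟩, ⟨b1, b2⟩⟩
      exact ⟨abs_le.2 ⟨by linarith, by linarith⟩, abs_le.2 ⟨by linarith, by linarith⟩⟩
  rw [hSq, Complex.volume_preserving_equiv_real_prod.measure_preimage
    ((measurableSet_Icc.prod measurableSet_Icc).nullMeasurableSet)]
  rw [Measure.volume_eq_prod, Measure.prod_prod, Real.volume_Icc, Real.volume_Icc]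
  rw [← ENNReal.ofReal_mul (by linarith)]
  congr 1
  ring

lemma volume_Sq_toReal (c : ℂ) {l : ℝ} (hl : 0 ≤ l) : (volume (Sq c l)).toReal = l^2 := by
  rw [volume_Sq c hl, ENNReal.toReal_ofReal (by positivity)]

lemma abs_ge_of_not_mem_Sq {c : ℂ} {l : ℝ} {z : ℂ} (h : z ∉ Sq c l) :
    l / 2 ≤ ‖z - c‖ := by
  simp only [Sq, mem_setOf_eq, not_and_or, not_le] at h
  rcases h with h | h
  · calc l / 2 ≤ |z.re - c.re| := h.le
      _ = |(z - c).re| := by simp [Complex.sub_re]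
      _ ≤ ‖z - c‖ := Complex.abs_re_le_norm _
  · calc l / 2 ≤ |z.im - c.im| := h.le
      _ = |(z - c).im| := by simp [Complex.sub_im]
      _ ≤ ‖z - c‖ := Complex.abs_im_le_norm _

lemma exists_mem_Sq (c : ℂ) {l : ℝ} (hl : 0 < l) (z : ℂ) : ∃ n : ℕ, z ∈ Sq c (2^n * l) := by
  obtain ⟨n, hn⟩ := pow_unbounded_of_one_lt (2 * (|z.re - c.re| + |z.im - c.im| + 1) / l)
    (one_lt_two (α := ℝ))
  refine ⟨n, ?_, ?_⟩ <;>
  · rw [div_lt_iff₀ hl] at hn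
    have h1 : (0:ℝ) ≤ |z.re - c.re| := abs_nonneg _
    have h2 : (0:ℝ) ≤ |z.im - c.im| := abs_nonneg _
    nlinarith

lemma compl_Sq_eq_iUnion (c : ℂ) {l : ℝ} (hl : 0 < l) :
    (Sq c (2 * l))ᶜ = ⋃ n : ℕ, (Sq c (2^(n+2) * l) \ Sq c (2^(n+1) * l)) := by
  ext z
  simp only [mem_compl_iff, mem_iUnion, mem_diff]
  constructor
  · intro hz
    have hex : ∃ n : ℕ, z ∈ Sq c (2^n * l) := exists_mem_Sq c hl z
    classical
    set k := Nat.find hex with hk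
    have hzk : z ∈ Sq c (2^k * l) := Nat.find_spec hex
    have hk1 : ¬ z ∈ Sq c (2^1 * l) := by simpa [pow_one] using hz
    have hk0 : ¬ z ∈ Sq c (2^0 * l) := fun h => hk1 (Sq_subset c (by norm_num; linarith) h)
    have h2k : 2 ≤ k := by
      rcases Nat.lt_or_ge k 2 with h | h
      · interval_cases k
        · exact absurd hzk hk0
        · exact absurd hzk hk1
      · exact h
    refine ⟨k - 2, ?_, ?_⟩
    · rwa [Nat.sub_add_cancel h2k]
    · have : k - 2 + 1 < k := by omega
      exact Nat.find_min hex this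
  · rintro ⟨n, hn, hn'⟩ hz
    exact hn' (Sq_subset c (by
      have h : (2:ℝ)^1 ≤ 2^(n+1) := pow_le_pow_right₀ (by norm_num) (by omega)
      have h2 : (2:ℝ) ≤ 2^(n+1) := by simpa using h
      nlinarith) hz)

lemma integrableOn_Sq {g : ℂ → ℂ} (hg : LocallyIntegrable g volume) (c : ℂ) (l : ℝ) :
    IntegrableOn g (Sq c l) volume :=
  hg.integrableOn_isCompact (isCompact_Sq c l)

lemma volume_Sq_lt_top (c : ℂ) (l : ℝ) : volume (Sq c l) < ⊤ :=
  (isCompact_Sq c l).measure_lt_top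

lemma avgOn_sub_abs_le {g : ℂ → ℂ} (hg : LocallyIntegrable g volume) (c : ℂ) {s t : ℝ}
    (hs : 0 < s) (hst : s ≤ t) (v : ℂ) :
    ‖avgOn g (Sq c s) - v‖ ≤
      (s^2)⁻¹ * ∫ z in Sq c t, ‖g z - v‖ := by
  have hs2 : (0:ℝ) < s^2 := by positivity
  have hint_s : IntegrableOn g (Sq c s) volume := integrableOn_Sq hg c s
  have hint_t : IntegrableOn g (Sq c t) volume := integrableOn_Sq hg c t
  have hconst_s : IntegrableOn (fun _ : ℂ => v) (Sq c s) volume :=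
    integrableOn_const (volume_Sq_lt_top c s).ne
  have key : avgOn g (Sq c s) - v = (s^2)⁻¹ • ∫ z in Sq c s, (g z - v) := by
    rw [integral_sub hint_s hconst_s, setIntegral_const, measureReal_def, volume_Sq_toReal c (le_of_lt hs),
      smul_sub, smul_smul, inv_mul_cancel₀ (ne_of_gt hs2), one_smul, avgOn,
      volume_Sq_toReal c (le_of_lt hs)]
  rw [key]
  rw [norm_smul]
  have h1 : ‖∫ z in Sq c s, (g z - v)‖ ≤ ∫ z in Sq c s, ‖g z - v‖ :=
    norm_integral_le_integral_norm _
  have hconst_t : IntegrableOn (fun _ : ℂ => v) (Sq c t) volume :=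
    integrableOn_const (volume_Sq_lt_top c t).ne
  have h2 : ∫ z in Sq c s, ‖g z - v‖ ≤ ∫ z in Sq c t, ‖g z - v‖ := by
    refine setIntegral_mono_set ((hint_t.sub hconst_t).norm) ?_ ?_
    · exact Eventually.of_forall (fun z => norm_nonneg _)
    · exact HasSubset.Subset.eventuallyLE (Sq_subset c hst)
  have hnorm : ‖(s^2:ℝ)⁻¹‖ = (s^2)⁻¹ := by
    rw [Real.norm_eq_abs, abs_of_pos (by positivity)]
  rw [hnorm]
  exact mul_le_mul_of_nonneg_left (h1.trans h2) (by positivity)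

end Helpers

set_option maxHeartbeats 2000000 in
/-- third-term estimate in Section `ss_tterm`. For a regular `ω`
and `g ∈ BMO_ω(ℂ) ∩ L^∞(ℂ)`, for every square `Q` of side `ℓ ≤ 1/4` centered at `z₀`,
`ℓ ∫_{ℂ∖2Q} |g(u) − g_Q| / |u − z₀|³ dA(u) ≤ C (‖g‖_{BMO_ω} + ‖g‖_∞) ω(ℓ)`. -/
theorem statement11 (ω : ℝ → ℝ) (hmod : IsModulus ω) (hreg : IsRegularModulus ω) :
    ∃ C : ℝ, 0 < C ∧ ∀ (g : ℂ → ℂ) (N Msup : ℝ),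
      LocallyIntegrable g volume →
      (∀ᵐ z : ℂ, ‖g z‖ ≤ Msup) →
      BMOBound ω g N →
      ∀ (c : ℂ) (l : ℝ), 0 < l → l ≤ 1 / 4 →
        IntegrableOn
          (fun u => ‖g u - avgOn g (Sq c l)‖ / ‖u - c‖ ^ 3)
          (Sq c (2 * l))ᶜ volume ∧
        l * ∫ u in (Sq c (2 * l))ᶜ,
            ‖g u - avgOn g (Sq c l)‖ / ‖u - c‖ ^ 3 ≤
          C * (N + Msup) * ω l := by
  obtain ⟨hcont, hmono, hω0, hωpos⟩ := hmod
  obtain ⟨-, ε, ⟨hε0, hε1⟩, C₀, hC₀, hreg'⟩ := hreg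
  have hωnonneg : ∀ t : ℝ, 0 ≤ t → 0 ≤ ω t := by
    intro t ht
    rcases eq_or_lt_of_le ht with h | h
    · rw [← h, hω0]
    · exact (hωpos t h).le
  set a : ℝ := (2:ℝ) ^ ε with ha
  have ha1 : 1 < a := (Real.one_lt_rpow_iff_of_pos (by norm_num)).2 (Or.inl ⟨by norm_num, hε0⟩)
  have ha0 : 0 < a := lt_trans one_pos ha1
  have hpow2 : ∀ m : ℕ, ((2:ℝ)^m) ^ ε = a ^ m := by
    intro m
    rw [← Real.rpow_natCast (2:ℝ) m, ← Real.rpow_mul (by norm_num), mul_comm,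
      Real.rpow_mul (by norm_num), Real.rpow_natCast]
  set r : ℝ := a / 2 with hrdef
  have hr0 : 0 < r := by positivity
  have hr1 : r < 1 := by
    have : a < 2 := by
      calc a = (2:ℝ)^ε := rfl
        _ < (2:ℝ)^(1:ℝ) := Real.rpow_lt_rpow_of_exponent_lt (by norm_num) hε1
        _ = 2 := Real.rpow_one 2
    rw [hrdef]; linarith
  have h1r : (0:ℝ) < 1 - r := by linarith
  set D : ℝ := C₀ * (1 + 4*a/(a-1)) with hD
  have ha' : (0:ℝ) < a - 1 := by linarith
  have hDpos : 0 < D := by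
    have : (0:ℝ) < 1 + 4*a/(a-1) := by positivity
    positivity
  set C : ℝ := 16 * D * a^2 / (1 - r) with hC
  have hCpos : 0 < C := by positivity
  refine ⟨C, hCpos, ?_⟩
  intro g N Msup hg hM hBMO c l hl hl4
  have hl0 : (0:ℝ) ≤ l := hl.le
  have hωl : 0 < ω l := hωpos l hl
  have hN0 : 0 ≤ N := by
    have h1 := hBMO c l hl
    have h2 : (0:ℝ) ≤ ∫ z in Sq c l, ‖g z - avgOn g (Sq c l)‖ :=
      setIntegral_nonneg (measurableSet_Sq c l) (fun z _ => norm_nonneg _)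
    nlinarith [mul_pos hωl (mul_pos hl hl)]
  have hMsup0 : 0 ≤ Msup := by
    obtain ⟨z, hz⟩ := hM.exists
    exact le_trans (norm_nonneg _) hz
  have hgrow : ∀ j : ℕ, ω (2^(j+1) * l) ≤ C₀ * a^(j+1) * ω l := by
    intro j
    have h2j : (1:ℝ) < 2^(j+1) := one_lt_pow₀ (by norm_num) (by omega)
    have hlt : l < 2^(j+1) * l := by nlinarith
    have h := hreg' (2^(j+1) * l) l hl hlt
    have htpos : (0:ℝ) < 2^(j+1) * l := by positivity
    have hte : (0:ℝ) < (2^(j+1) * l) ^ ε := Real.rpow_pos_of_pos htpos ε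
    have hle : (0:ℝ) < l ^ ε := Real.rpow_pos_of_pos hl ε
    have hmulε : ((2:ℝ)^(j+1) * l) ^ ε = a^(j+1) * l ^ ε := by
      rw [Real.mul_rpow (by positivity) hl0, hpow2]
    rw [div_le_iff₀ hte] at h
    calc ω (2^(j+1) * l) ≤ C₀ * (ω l / l ^ ε) * (2^(j+1) * l) ^ ε := h
      _ = C₀ * a^(j+1) * ω l := by
          rw [hmulε]; field_simp
  set m : ℕ → ℂ := fun n => avgOn g (Sq c (2^n * l)) with hm
  set gQ : ℂ := avgOn g (Sq c l) with hgQ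
  have hm0 : m 0 = gQ := by
    rw [hm, hgQ]; norm_num
  have habs_int : ∀ (v : ℂ) (s : ℝ),
      IntegrableOn (fun z => ‖g z - v‖) (Sq c s) volume := by
    intro v s
    have hconst : IntegrableOn (fun _ : ℂ => v) (Sq c s) volume :=
      integrableOn_const (volume_Sq_lt_top c s).ne
    have h := ((integrableOn_Sq hg c s).sub hconst).norm
    exact h
  have hmstep : ∀ n : ℕ, ‖m n - m (n+1)‖ ≤ 4 * N * ω (2^(n+1) * l) := by
    intro n
    have hsn : (0:ℝ) < 2^n * l := by positivity
    have hst : (2:ℝ)^n * l ≤ 2^(n+1) * l := by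
      have : (2:ℝ)^n ≤ 2^(n+1) := pow_le_pow_right₀ (by norm_num) (by omega)
      nlinarith
    have h1 := avgOn_sub_abs_le hg c hsn hst (m (n+1))
    have h2 := hBMO c (2^(n+1) * l) (by positivity)
    have h3 : ‖m n - m (n+1)‖ ≤
        (((2:ℝ)^n*l)^2)⁻¹ * (N * (ω (2^(n+1)*l) * (2^(n+1)*l)^2)) := by
      refine h1.trans ?_
      exact mul_le_mul_of_nonneg_left h2 (by positivity)
    refine h3.trans (le_of_eq ?_)
    have e1 : ((2:ℝ)^(n+1)*l)^2 = 4 * ((2^n*l)^2) := by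
      rw [pow_succ]; ring
    rw [e1]
    field_simp
  have htel : ∀ k : ℕ, ‖m 0 - m k‖ ≤ 4*N*C₀*(ω l)*a^(k+1)/(a-1) := by
    intro k
    induction k with
    | zero =>
      simp only [sub_self, norm_zero]
      positivity
    | succ k ih =>
      have h1 : ‖m 0 - m (k+1)‖ ≤
          ‖m 0 - m k‖ + ‖m k - m (k+1)‖ := by
        calc ‖m 0 - m (k+1)‖ = ‖(m 0 - m k) + (m k - m (k+1))‖ := by
              ring_nf
          _ ≤ _ := norm_add_le _ _
      have h2 := hmstep k
      have h3 : ω (2^(k+1) * l) ≤ C₀ * a^(k+1) * ω l := hgrow k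
      have hak : (0:ℝ) < a^(k+1) := by positivity
      have h4 : 4 * N * ω (2^(k+1) * l) ≤ 4 * N * (C₀ * a^(k+1) * ω l) :=
        mul_le_mul_of_nonneg_left h3 (by linarith)
      have h5 : 4*N*C₀*(ω l)*a^(k+1)/(a-1) + 4 * N * (C₀ * a^(k+1) * ω l) =
          4*N*C₀*(ω l)*a^(k+1+1)/(a-1) := by
        field_simp
        ring
      linarith [h1, ih, h2.trans h4]
  have hTn : ∀ n : ℕ, (∫ z in Sq c ((2:ℝ)^(n+2)*l), ‖g z - gQ‖) ≤
      ((2:ℝ)^(n+2)*l)^2 * (N * ω l * D * a^(n+2)) := by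
    intro n
    have htpos : (0:ℝ) < (2:ℝ)^(n+2)*l := by positivity
    set t : ℝ := (2:ℝ)^(n+2)*l with htdef
    have hint1 := habs_int (m (n+2)) t
    have hptwise : ∀ z : ℂ, ‖g z - gQ‖ ≤
        ‖g z - m (n+2)‖ + ‖m (n+2) - gQ‖ := by
      intro z
      calc ‖g z - gQ‖ = ‖(g z - m (n+2)) + (m (n+2) - gQ)‖ := by
            ring_nf
        _ ≤ _ := norm_add_le _ _
    have hconst : IntegrableOn (fun _ : ℂ => ‖m (n+2) - gQ‖) (Sq c t) volume :=
      integrableOn_const (volume_Sq_lt_top c t).ne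
    have step1 : (∫ z in Sq c t, ‖g z - gQ‖) ≤
        ∫ z in Sq c t, (‖g z - m (n+2)‖ + ‖m (n+2) - gQ‖) :=
      setIntegral_mono (habs_int gQ t) (hint1.add hconst) hptwise
    have step2 : (∫ z in Sq c t, (‖g z - m (n+2)‖ + ‖m (n+2) - gQ‖))
        = (∫ z in Sq c t, ‖g z - m (n+2)‖) + t^2 * ‖m (n+2) - gQ‖ := by
      rw [integral_add hint1 hconst, setIntegral_const, measureReal_def, volume_Sq_toReal c htpos.le,
        smul_eq_mul]
    have step3 : (∫ z in Sq c t, ‖g z - m (n+2)‖) ≤ N * (ω t * t^2) := by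
      have h := hBMO c t htpos
      simpa [hm] using h
    have step4 : ‖m (n+2) - gQ‖ ≤ 4*N*C₀*(ω l)*a^(n+3)/(a-1) := by
      have h := htel (n+2)
      rw [hm0] at h
      calc ‖m (n+2) - gQ‖ = ‖gQ - m (n+2)‖ := by
            rw [norm_sub_rev]
        _ ≤ 4*N*C₀*(ω l)*a^(n+2+1)/(a-1) := h
        _ = 4*N*C₀*(ω l)*a^(n+3)/(a-1) := by norm_num
    have step5 : ω t ≤ C₀ * a^(n+2) * ω l := by
      have h := hgrow (n+1)
      simpa [htdef] using h
    have h5 : N * (ω t * t^2) ≤ t^2 * (N * (C₀ * a^(n+2) * ω l)) := by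
      have h6 := mul_le_mul_of_nonneg_left step5 hN0
      nlinarith [sq_nonneg t]
    have h7 := mul_le_mul_of_nonneg_left step4 (le_of_lt (by positivity : (0:ℝ) < t^2))
    have hsplit : t^2 * (N * ω l * D * a^(n+2)) =
        t^2 * (N * (C₀ * a^(n+2) * ω l)) + t^2 * (4*N*C₀*(ω l)*a^(n+3)/(a-1)) := by
      rw [hD]; field_simp; ring
    calc (∫ z in Sq c t, ‖g z - gQ‖)
        ≤ (∫ z in Sq c t, ‖g z - m (n+2)‖) + t^2 * ‖m (n+2) - gQ‖ := by
          rw [← step2]; exact step1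
      _ ≤ N * (ω t * t^2) + t^2 * (4*N*C₀*(ω l)*a^(n+3)/(a-1)) := by linarith
      _ ≤ t^2 * (N * ω l * D * a^(n+2)) := by rw [hsplit]; linarith
  -- annuli
  set f : ℂ → ℝ := fun u => ‖g u - gQ‖ / ‖u - c‖ ^ 3 with hf
  set A : ℕ → Set ℂ := fun n => Sq c (2^(n+2) * l) \ Sq c (2^(n+1) * l) with hA
  have hAmeas : ∀ n, MeasurableSet (A n) := fun n =>
    (measurableSet_Sq _ _).diff (measurableSet_Sq _ _)
  have hAsub : ∀ {i j : ℕ}, i < j → A i ⊆ Sq c (2^(j+1) * l) := by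
    intro i j hij u hu
    refine Sq_subset c ?_ hu.1
    exact mul_le_mul_of_nonneg_right (pow_le_pow_right₀ one_le_two (by omega)) hl0
  have hAdisj : Pairwise (Function.onFun Disjoint A) := by
    intro i j hij
    rcases lt_or_gt_of_ne hij with h | h
    · exact Set.disjoint_left.2 (fun u hu hu' => hu'.2 (hAsub h hu))
    · exact (Set.disjoint_left.2 (fun u hu hu' => hu'.2 (hAsub h hu))).symm
  set E : ℝ := 16 * D * a^2 * (N * ω l) * l⁻¹ with hE
  have hE0 : 0 ≤ E := by positivity
  have hAn : ∀ n : ℕ, (∫⁻ u in A n, ENNReal.ofReal (f u)) ≤ ENNReal.ofReal (E * r^n) := by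
    intro n
    have hpos1 : (0:ℝ) < 2^n * l := by positivity
    have hpos3 : (0:ℝ) < (2^n * l)^3 := by positivity
    have hbound : ∀ u ∈ A n, f u ≤ ((2^n*l)^3)⁻¹ * ‖g u - gQ‖ := by
      intro u hu
      have h1 : (2:ℝ)^n * l ≤ ‖u - c‖ := by
        have h := abs_ge_of_not_mem_Sq hu.2
        calc (2:ℝ)^n*l = (2^(n+1)*l)/2 := by rw [pow_succ]; ring
          _ ≤ _ := h
      have h2 : ((2:ℝ)^n*l)^3 ≤ ‖u - c‖^3 := pow_le_pow_left₀ hpos1.le h1 3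
      have h3 : f u = ‖g u - gQ‖ / ‖u - c‖ ^ 3 := rfl
      rw [h3, ← div_eq_inv_mul]
      exact div_le_div_of_nonneg_left (norm_nonneg _) hpos3 h2
    have hintA : IntegrableOn (fun u => ((2^n*l)^3)⁻¹ * ‖g u - gQ‖) (A n) volume :=
      (((habs_int gQ (2^(n+2)*l)).mono_set diff_subset)).const_mul _
    have step1 : (∫⁻ u in A n, ENNReal.ofReal (f u)) ≤
        ∫⁻ u in A n, ENNReal.ofReal (((2^n*l)^3)⁻¹ * ‖g u - gQ‖) := by
      refine lintegral_mono_ae ?_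
      refine (ae_restrict_iff' (hAmeas n)).2 (Eventually.of_forall fun u hu => ?_)
      exact ENNReal.ofReal_le_ofReal (hbound u hu)
    have step2 : (∫⁻ u in A n, ENNReal.ofReal (((2^n*l)^3)⁻¹ * ‖g u - gQ‖)) =
        ENNReal.ofReal (∫ u in A n, ((2^n*l)^3)⁻¹ * ‖g u - gQ‖) :=
      (ofReal_integral_eq_lintegral_ofReal hintA
        (Eventually.of_forall fun u => by positivity)).symm
    have hsub : (∫ u in A n, ‖g u - gQ‖) ≤
        ∫ u in Sq c ((2:ℝ)^(n+2)*l), ‖g u - gQ‖ :=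
      setIntegral_mono_set (habs_int gQ _)
        (Eventually.of_forall fun u => norm_nonneg _)
        (HasSubset.Subset.eventuallyLE diff_subset)
    have step3 : (∫ u in A n, ((2^n*l)^3)⁻¹ * ‖g u - gQ‖) ≤ E * r^n := by
      rw [integral_const_mul]
      calc ((2^n*l)^3)⁻¹ * ∫ u in A n, ‖g u - gQ‖
          ≤ ((2^n*l)^3)⁻¹ * (((2:ℝ)^(n+2)*l)^2 * (N * ω l * D * a^(n+2))) :=
            mul_le_mul_of_nonneg_left (hsub.trans (hTn n)) (by positivity)
        _ = E * r^n := by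
            rw [hE, hrdef]
            have e1 : (2:ℝ)^(n+2) = 2^n * 4 := by rw [pow_add]; norm_num
            have e2 : a^(n+2) = a^n * a^2 := by rw [pow_add]
            have e3 : (a/2)^n = a^n / 2^n := div_pow a 2 n
            rw [e1, e2, e3]
            have h2n : ((2:ℝ)^n) ≠ 0 := by positivity
            field_simp
            ring
    calc (∫⁻ u in A n, ENNReal.ofReal (f u)) ≤ _ := step1
      _ = ENNReal.ofReal (∫ u in A n, ((2^n*l)^3)⁻¹ * ‖g u - gQ‖) := step2
      _ ≤ ENNReal.ofReal (E * r^n) := ENNReal.ofReal_le_ofReal step3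
  have hsummable : Summable (fun n : ℕ => E * r^n) :=
    (summable_geometric_of_lt_one hr0.le hr1).mul_left E
  have htsum : (∑' n : ℕ, E * r^n) = E * (1-r)⁻¹ := by
    rw [tsum_mul_left, tsum_geometric_of_lt_one hr0.le hr1]
  have hUeq : (Sq c (2*l))ᶜ = ⋃ n, A n := compl_Sq_eq_iUnion c hl
  have hlint : (∫⁻ u in (Sq c (2*l))ᶜ, ENNReal.ofReal (f u)) ≤ ENNReal.ofReal (E * (1-r)⁻¹) := by
    rw [hUeq, lintegral_iUnion hAmeas hAdisj]
    calc (∑' n, ∫⁻ u in A n, ENNReal.ofReal (f u)) ≤ ∑' n, ENNReal.ofReal (E * r^n) :=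
          ENNReal.tsum_le_tsum hAn
      _ = ENNReal.ofReal (∑' n, E * r^n) :=
          (ENNReal.ofReal_tsum_of_nonneg (fun n => by positivity) hsummable).symm
      _ = ENNReal.ofReal (E * (1-r)⁻¹) := by rw [htsum]
  have hfmeas : AEStronglyMeasurable f (volume.restrict (Sq c (2*l))ᶜ) := by
    have h1 : AEStronglyMeasurable (fun u => ‖g u - gQ‖) volume := by
      have h := (hg.aestronglyMeasurable.sub (aestronglyMeasurable_const (b := gQ))).norm
      simpa using h
    have h2 : AEMeasurable (fun u : ℂ => ‖u - c‖^3) volume :=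
      (Continuous.measurable (by continuity)).aemeasurable
    exact ((h1.aemeasurable.div h2).aestronglyMeasurable).restrict
  have hfnonneg : 0 ≤ᵐ[volume.restrict (Sq c (2*l))ᶜ] f :=
    Eventually.of_forall (fun u => by positivity)
  have hInt : IntegrableOn f (Sq c (2*l))ᶜ volume := by
    refine ⟨hfmeas, ?_⟩
    rw [hasFiniteIntegral_iff_ofReal hfnonneg]
    exact lt_of_le_of_lt hlint ENNReal.ofReal_lt_top
  have hEr : 0 ≤ E * (1-r)⁻¹ := mul_nonneg hE0 (inv_nonneg.2 h1r.le)
  have hIle : (∫ u in (Sq c (2*l))ᶜ, f u) ≤ E * (1-r)⁻¹ := by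
    rw [integral_eq_lintegral_of_nonneg_ae hfnonneg hfmeas]
    exact ENNReal.toReal_le_of_le_ofReal hEr hlint
  constructor
  · exact hInt
  · calc l * ∫ u in (Sq c (2*l))ᶜ, f u ≤ l * (E * (1-r)⁻¹) :=
        mul_le_mul_of_nonneg_left hIle hl0
      _ = C * N * ω l := by
          rw [hE, hC]
          field_simp
      _ ≤ C * (N + Msup) * ω l := by
          nlinarith [mul_nonneg (mul_nonneg hCpos.le hMsup0) hωl.le]
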